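/- For every x ∈ ℝ, the principal value limit lim_{ε→0⁺} ∫_{{y : |y−x| ≥ ε}} (arctan(x) − arctan(y))/(x−y)² dy exists and equals πx/(1+x²). Equivalently, the half-Laplacian (−Δ)^{1/2}, given by the singular integral (1/π)·P.V.∫ (u(x)−u(y))/(x−y)² dy, applied to the wave profile F(x) = 1/2 + (1/π)·arctan(x) equals x·f(x) = x/(π(1+x²)). -/

import Mathlib

open Real MeasureTheory Filter Topology Set

noncomputable def auxPhi (x y : ℝ) : ℝ :=
  (Real.arctan x - Real.arctan y) / (x - y) +
    (1 + x ^ 2)⁻¹ * (x * Real.arctan y + Real.log (1 + y ^ 2) / 2 - Real.log (x - y))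

lemma auxPhi_hasDerivAt (x y : ℝ) (h : y ≠ x) :
    HasDerivAt (auxPhi x) ((Real.arctan x - Real.arctan y) / (x - y) ^ 2) y := by
  have hxy : x - y ≠ 0 := sub_ne_zero.mpr (Ne.symm h)
  have hy2 : (1 : ℝ) + y ^ 2 ≠ 0 := by positivity
  have hx2 : (1 : ℝ) + x ^ 2 ≠ 0 := by positivity
  have h1 : HasDerivAt (fun y : ℝ => Real.arctan x - Real.arctan y)
      (-(1 / (1 + y ^ 2))) y := (Real.hasDerivAt_arctan y).const_sub _
  have h2 : HasDerivAt (fun y : ℝ => x - y) (-1) y := by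
    simpa using (hasDerivAt_id y).const_sub x
  have hquot := h1.div h2 hxy
  have h3 : HasDerivAt (fun y : ℝ => 1 + y ^ 2) (2 * y) y := by
    simpa using (hasDerivAt_pow 2 y).const_add 1
  have hlog1 : HasDerivAt (fun y : ℝ => Real.log (1 + y ^ 2)) ((1 + y ^ 2)⁻¹ * (2 * y)) y :=
    (Real.hasDerivAt_log hy2).comp (h₂ := Real.log) y h3
  have hlog2 : HasDerivAt (fun y : ℝ => Real.log (x - y)) ((x - y)⁻¹ * (-1)) y :=
    (Real.hasDerivAt_log hxy).comp y h2
  have H := hquot.add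
    (((((Real.hasDerivAt_arctan y).const_mul x).add (hlog1.div_const 2)).sub hlog2).const_mul
      ((1 + x ^ 2)⁻¹))
  refine H.congr_deriv ?_
  field_simp
  ring

lemma auxFrac {l : Filter ℝ} (x : ℝ) (hinv : Tendsto (fun y : ℝ => (x - y)⁻¹) l (𝓝 0)) :
    Tendsto (fun y : ℝ => (Real.arctan x - Real.arctan y) / (x - y)) l (𝓝 0) := by
  have habs : ∀ t : ℝ, |Real.arctan t| ≤ π / 2 := fun t =>
    abs_le.mpr ⟨(Real.neg_pi_div_two_lt_arctan t).le, (Real.arctan_lt_pi_div_two t).le⟩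
  have hb : ∀ᶠ y : ℝ in l, |Real.arctan x - Real.arctan y| ≤ π := by
    filter_upwards with y
    calc |Real.arctan x - Real.arctan y| ≤ |Real.arctan x| + |Real.arctan y| := abs_sub _ _
      _ ≤ π / 2 + π / 2 := add_le_add (habs x) (habs y)
      _ = π := by ring
  simpa only [div_eq_mul_inv] using bdd_le_mul_tendsto_zero' π hb hinv

lemma auxRatio {l : Filter ℝ} (x : ℝ) (hinv : Tendsto (fun y : ℝ => y⁻¹) l (𝓝 0))
    (hne : ∀ᶠ y in l, y ≠ 0 ∧ x - y ≠ 0) :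
    Tendsto (fun y : ℝ => (1 + y ^ 2) / (x - y) ^ 2) l (𝓝 1) := by
  have key : Tendsto (fun y : ℝ => ((y⁻¹) ^ 2 + 1) / ((x * y⁻¹ - 1) ^ 2)) l
      (𝓝 ((0 ^ 2 + 1) / ((x * 0 - 1) ^ 2))) := by
    apply Tendsto.div
    · exact (hinv.pow 2).add tendsto_const_nhds
    · exact (((hinv.const_mul x).sub tendsto_const_nhds).pow 2)
    · norm_num
  have key' : Tendsto (fun y : ℝ => ((y⁻¹) ^ 2 + 1) / ((x * y⁻¹ - 1) ^ 2)) l (𝓝 1) := by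
    convert key using 2; norm_num
  apply key'.congr'
  filter_upwards [hne] with y hy
  obtain ⟨hy0, hxy⟩ := hy
  have hxy1 : x * y⁻¹ - 1 ≠ 0 := by
    intro hcon
    apply hxy
    have : x * y⁻¹ = 1 := by linarith
    field_simp at this
    linarith
  field_simp

lemma auxLog {l : Filter ℝ} (x : ℝ)
    (hr : Tendsto (fun y : ℝ => (1 + y ^ 2) / (x - y) ^ 2) l (𝓝 1))
    (hne : ∀ᶠ y in l, x - y ≠ 0) :
    Tendsto (fun y : ℝ => Real.log (1 + y ^ 2) / 2 - Real.log (x - y)) l (𝓝 0) := by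
  have hlog : Tendsto (fun y : ℝ => Real.log ((1 + y ^ 2) / (x - y) ^ 2) / 2) l (𝓝 0) := by
    have := ((Real.continuousAt_log one_ne_zero).tendsto.comp hr).div_const 2
    simpa using this
  apply hlog.congr'
  filter_upwards [hne] with y hxy
  have hy2 : (1 : ℝ) + y ^ 2 ≠ 0 := by positivity
  have hsq : ((x - y) ^ 2 : ℝ) ≠ 0 := pow_ne_zero 2 hxy
  rw [Real.log_div hy2 hsq, Real.log_pow]
  push_cast
  ring

lemma auxPhi_tendsto_atTop (x : ℝ) :
    Tendsto (auxPhi x) atTop (𝓝 ((1 + x ^ 2)⁻¹ * (x * (π / 2)))) := by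
  have hinv : Tendsto (fun y : ℝ => (x - y)⁻¹) atTop (𝓝 0) := by
    have h1 : Tendsto (fun y : ℝ => y - x) atTop atTop := tendsto_atTop_add_const_right _ _ tendsto_id
    have := h1.inv_tendsto_atTop.neg
    simp only [neg_zero] at this
    apply this.congr
    intro y
    simp only [Pi.inv_apply, Pi.neg_apply]
    rw [← inv_neg, neg_sub]
  have hfrac := auxFrac x hinv
  have harct : Tendsto (fun y : ℝ => x * Real.arctan y) atTop (𝓝 (x * (π / 2))) :=
    (Real.tendsto_arctan_atTop.mono_right nhdsWithin_le_nhds).const_mul x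
  have hne : ∀ᶠ y : ℝ in atTop, y ≠ 0 ∧ x - y ≠ 0 := by
    filter_upwards [eventually_gt_atTop (max 0 x)] with y hy
    have h0 : (0:ℝ) < y := lt_of_le_of_lt (le_max_left _ _) hy
    have h1 : x < y := lt_of_le_of_lt (le_max_right _ _) hy
    exact ⟨ne_of_gt h0, sub_ne_zero.mpr (ne_of_lt h1)⟩
  have hlog := auxLog x (auxRatio x tendsto_inv_atTop_zero hne) (hne.mono fun y hy => hy.2)
  have H := hfrac.add (((harct.add hlog).sub_const 0).const_mul ((1 + x ^ 2)⁻¹))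
  simp only [add_zero, zero_add, sub_zero] at H
  apply H.congr
  intro y
  simp only [auxPhi]
  ring
lemma auxPhi_tendsto_atBot (x : ℝ) :
    Tendsto (auxPhi x) atBot (𝓝 ((1 + x ^ 2)⁻¹ * (x * (-(π / 2))))) := by
  have hinv : Tendsto (fun y : ℝ => (x - y)⁻¹) atBot (𝓝 0) := by
    have h1 : Tendsto (fun y : ℝ => x - y) atBot atTop := by
      have := (tendsto_neg_atBot_atTop : Tendsto (fun y : ℝ => -y) atBot atTop)
      exact (tendsto_atTop_add_const_left _ x this).congr (fun y => by ring)
    exact h1.inv_tendsto_atTop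
  have hfrac := auxFrac x hinv
  have harct : Tendsto (fun y : ℝ => x * Real.arctan y) atBot (𝓝 (x * (-(π / 2)))) :=
    (Real.tendsto_arctan_atBot.mono_right nhdsWithin_le_nhds).const_mul x
  have hne : ∀ᶠ y : ℝ in atBot, y ≠ 0 ∧ x - y ≠ 0 := by
    filter_upwards [eventually_lt_atBot (min 0 x)] with y hy
    have h0 : y < 0 := lt_of_lt_of_le hy (min_le_left _ _)
    have h1 : y < x := lt_of_lt_of_le hy (min_le_right _ _)
    exact ⟨ne_of_lt h0, sub_ne_zero.mpr (ne_of_gt h1)⟩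
  have hinv0 : Tendsto (fun y : ℝ => y⁻¹) atBot (𝓝 0) := by
    have := tendsto_inv_atTop_zero.comp (tendsto_neg_atBot_atTop : Tendsto (fun y : ℝ => -y) atBot atTop)
    simp only [Function.comp_def] at this
    have := this.neg
    simp only [neg_zero] at this
    apply this.congr
    intro y
    simp [Function.comp, inv_neg]
  have hlog := auxLog x (auxRatio x hinv0 hne) (hne.mono fun y hy => hy.2)
  have H := hfrac.add (((harct.add hlog).sub_const 0).const_mul ((1 + x ^ 2)⁻¹))
  simp only [add_zero, zero_add, sub_zero] at H
  apply H.congr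
  intro y
  simp only [auxPhi]
  ring

theorem half_laplacian_of_arctan_profile (x : ℝ) :
    Tendsto
      (fun ε : ℝ =>
        ∫ y in {y : ℝ | ε ≤ |y - x|},
          (Real.arctan x - Real.arctan y) / (x - y) ^ 2)
      (𝓝[>] (0 : ℝ)) (𝓝 (π * x / (1 + x ^ 2))) := by
  set c : ℝ := (1 + x ^ 2)⁻¹ with hc
  set f : ℝ → ℝ := fun y => (Real.arctan x - Real.arctan y) / (x - y) ^ 2 with hf
  have hx2 : (0:ℝ) < 1 + x ^ 2 := by positivity
  -- Step A : exact value of the integral for every ε > 0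
  have key : ∀ ε : ℝ, 0 < ε →
      (∫ y in {y : ℝ | ε ≤ |y - x|}, f y) =
        auxPhi x (x - ε) - auxPhi x (x + ε) +
          (c * (x * (π / 2)) - c * (x * (-(π / 2)))) := by
    intro ε hε
    have hset : {y : ℝ | ε ≤ |y - x|} = Iic (x - ε) ∪ Ici (x + ε) := by
      ext y
      simp only [mem_setOf_eq, mem_union, mem_Iic, mem_Ici, le_abs]
      constructor
      · rintro (h | h)
        · right; linarith
        · left; linarith
      · rintro (h | h)
        · right; linarith
        · left; linarith
    -- the right half-line
    have hIoi_deriv : ∀ y ∈ Ioi (x + ε), HasDerivAt (auxPhi x) (f y) y := fun y hy =>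
      auxPhi_hasDerivAt x y (by simp only [mem_Ioi] at hy; intro h; rw [h] at hy; linarith)
    have hcont_top : ContinuousWithinAt (auxPhi x) (Ici (x + ε)) (x + ε) :=
      (auxPhi_hasDerivAt x (x + ε) (by intro h; nlinarith [hε])).continuousAt.continuousWithinAt
    have hnonpos : ∀ y ∈ Ioi (x + ε), f y ≤ 0 := by
      intro y hy
      simp only [mem_Ioi] at hy
      apply div_nonpos_of_nonpos_of_nonneg _ (sq_nonneg _)
      have : Real.arctan x ≤ Real.arctan y := (Real.arctan_strictMono (by linarith)).le
      linarith
    have hIoiInt : IntegrableOn f (Ioi (x + ε)) :=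
      integrableOn_Ioi_deriv_of_nonpos hcont_top hIoi_deriv hnonpos (auxPhi_tendsto_atTop x)
    have hIoiVal : ∫ y in Ioi (x + ε), f y = c * (x * (π / 2)) - auxPhi x (x + ε) :=
      integral_Ioi_of_hasDerivAt_of_tendsto hcont_top hIoi_deriv hIoiInt (auxPhi_tendsto_atTop x)
    -- the left half-line, via reflection for integrability
    have haneq : ∀ t : ℝ, t ∈ Ici (-(x - ε)) → (-t : ℝ) ≠ x := by
      intro t ht
      simp only [mem_Ici, neg_sub] at ht
      intro h
      rw [← h] at ht
      linarith
    have hgd : ∀ t ∈ Ioi (-(x - ε)), HasDerivAt (fun t : ℝ => -(auxPhi x (-t))) (f (-t)) t := by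
      intro t ht
      have h1 := auxPhi_hasDerivAt x (-t) (haneq t (Ioi_subset_Ici_self ht))
      have h2 := (h1.comp t (hasDerivAt_neg t)).neg
      refine h2.congr_deriv ?_
      simp only [hf]
      ring
    have hgcont : ContinuousWithinAt (fun t : ℝ => -(auxPhi x (-t))) (Ici (-(x - ε)))
        (-(x - ε)) := by
      have h1 := auxPhi_hasDerivAt x (-(-(x - ε))) (haneq _ self_mem_Ici)
      have h2 := (h1.comp (-(x - ε)) (hasDerivAt_neg (-(x - ε)))).neg
      exact h2.continuousAt.continuousWithinAt
    have hgpos : ∀ t ∈ Ioi (-(x - ε)), 0 ≤ f (-t) := by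
      intro t ht
      simp only [mem_Ioi, neg_sub] at ht
      apply div_nonneg _ (sq_nonneg _)
      have : Real.arctan (-t) ≤ Real.arctan x := (Real.arctan_strictMono (by linarith)).le
      linarith
    have hgtend : Tendsto (fun t : ℝ => -(auxPhi x (-t))) atTop
        (𝓝 (-(c * (x * (-(π / 2)))))) := by
      have := ((auxPhi_tendsto_atBot x).comp
        (tendsto_neg_atTop_atBot : Tendsto (fun y : ℝ => -y) atTop atBot)).neg
      simpa [Function.comp] using this
    have hIoiInt2 : IntegrableOn (fun t : ℝ => f (-t)) (Ioi (-(x - ε))) :=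
      integrableOn_Ioi_deriv_of_nonneg hgcont hgd hgpos hgtend
    have hIciInt2 : IntegrableOn (fun t : ℝ => f (-t)) (Ici (-(x - ε))) :=
      (integrableOn_Ici_iff_integrableOn_Ioi enorm_ne_top).2 hIoiInt2
    have hIicInt : IntegrableOn f (Iic (x - ε)) := by
      have hpre : (Neg.neg : ℝ → ℝ) ⁻¹' (Iic (x - ε)) = Ici (-(x - ε)) := by
        ext t; simp [neg_le]
      refine (MeasurePreserving.integrableOn_comp_preimage
        (Measure.measurePreserving_neg _)
        (Homeomorph.neg ℝ).measurableEmbedding).1 ?_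
      rw [hpre]
      exact hIciInt2
    have hIic_deriv : ∀ y ∈ Iio (x - ε), HasDerivAt (auxPhi x) (f y) y := fun y hy =>
      auxPhi_hasDerivAt x y (by simp only [mem_Iio] at hy; intro h; rw [h] at hy; linarith)
    have hcont_bot : ContinuousWithinAt (auxPhi x) (Iic (x - ε)) (x - ε) :=
      (auxPhi_hasDerivAt x (x - ε) (by intro h; nlinarith [hε])).continuousAt.continuousWithinAt
    have hIicVal : ∫ y in Iic (x - ε), f y = auxPhi x (x - ε) - c * (x * (-(π / 2))) :=
      integral_Iic_of_hasDerivAt_of_tendsto hcont_bot hIic_deriv hIicInt (auxPhi_tendsto_atBot x)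
    -- put the two halves together
    have hIciInt : IntegrableOn f (Ici (x + ε)) :=
      (integrableOn_Ici_iff_integrableOn_Ioi enorm_ne_top).2 hIoiInt
    have hdisj : Disjoint (Iic (x - ε)) (Ici (x + ε)) := by
      apply Set.disjoint_left.mpr
      intro y hy hy2
      simp only [mem_Iic] at hy
      simp only [mem_Ici] at hy2
      linarith
    rw [hset, setIntegral_union hdisj measurableSet_Ici hIicInt hIciInt, hIicVal,
      integral_Ici_eq_integral_Ioi, hIoiVal]
    ring
  -- Step B : the limit of the explicit formula
  have hx_m : Tendsto (fun ε : ℝ => x - ε) (𝓝[>] 0) (𝓝 x) := by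
    have h0 : Tendsto (fun ε : ℝ => x - ε) (𝓝 0) (𝓝 (x - 0)) :=
      ((continuous_const (y := x)).sub continuous_id).tendsto 0
    simpa using h0.mono_left nhdsWithin_le_nhds
  have hx_p : Tendsto (fun ε : ℝ => x + ε) (𝓝[>] 0) (𝓝 x) := by
    have h0 : Tendsto (fun ε : ℝ => x + ε) (𝓝 0) (𝓝 (x + 0)) :=
      ((continuous_const (y := x)).add continuous_id).tendsto 0
    simpa using h0.mono_left nhdsWithin_le_nhds
  have hmap_m : Tendsto (fun ε : ℝ => x - ε) (𝓝[>] 0) (𝓝[≠] x) := by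
    rw [tendsto_nhdsWithin_iff]
    refine ⟨hx_m, ?_⟩
    filter_upwards [self_mem_nhdsWithin] with ε hε
    simp only [mem_compl_iff, mem_singleton_iff]
    intro h
    have : ε = 0 := by linarith [sub_eq_self.mp h]
    exact absurd this (ne_of_gt hε)
  have hmap_p : Tendsto (fun ε : ℝ => x + ε) (𝓝[>] 0) (𝓝[≠] x) := by
    rw [tendsto_nhdsWithin_iff]
    refine ⟨hx_p, ?_⟩
    filter_upwards [self_mem_nhdsWithin] with ε hε
    simp only [mem_compl_iff, mem_singleton_iff]
    intro h
    have : ε = 0 := by linarith [add_eq_left.mp h]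
    exact absurd this (ne_of_gt hε)
  have hslope := hasDerivAt_iff_tendsto_slope.mp (Real.hasDerivAt_arctan x)
  have h1 : Tendsto (fun ε : ℝ => (Real.arctan x - Real.arctan (x - ε)) / ε) (𝓝[>] 0)
      (𝓝 (1 / (1 + x ^ 2))) := by
    have := hslope.comp hmap_m
    apply this.congr
    intro ε
    simp only [Function.comp_apply]
    rw [slope_def_field, show x - ε - x = -ε from by ring, div_neg]
    ring
  have h2 : Tendsto (fun ε : ℝ => (Real.arctan x - Real.arctan (x + ε)) / ε) (𝓝[>] 0)
      (𝓝 (-(1 / (1 + x ^ 2)))) := by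
    have := (hslope.comp hmap_p).neg
    apply this.congr
    intro ε
    simp only [Function.comp_apply]
    rw [slope_def_field, show x + ε - x = ε from by ring]
    ring
  have harct_m : Tendsto (fun ε : ℝ => Real.arctan (x - ε)) (𝓝[>] 0) (𝓝 (Real.arctan x)) :=
    (Real.continuous_arctan.tendsto x).comp hx_m
  have harct_p : Tendsto (fun ε : ℝ => Real.arctan (x + ε)) (𝓝[>] 0) (𝓝 (Real.arctan x)) :=
    (Real.continuous_arctan.tendsto x).comp hx_p
  have hlog_m : Tendsto (fun ε : ℝ => Real.log (1 + (x - ε) ^ 2)) (𝓝[>] 0)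
      (𝓝 (Real.log (1 + x ^ 2))) :=
    ((Real.continuousAt_log (ne_of_gt hx2)).tendsto).comp
      (tendsto_const_nhds.add (hx_m.pow 2))
  have hlog_p : Tendsto (fun ε : ℝ => Real.log (1 + (x + ε) ^ 2)) (𝓝[>] 0)
      (𝓝 (Real.log (1 + x ^ 2))) :=
    ((Real.continuousAt_log (ne_of_gt hx2)).tendsto).comp
      (tendsto_const_nhds.add (hx_p.pow 2))
  -- the limit of the combined explicit expression
  have hT : Tendsto (fun ε : ℝ =>
      (Real.arctan x - Real.arctan (x - ε)) / ε + (Real.arctan x - Real.arctan (x + ε)) / ε +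
        c * (x * (Real.arctan (x - ε) - Real.arctan (x + ε)) +
          (Real.log (1 + (x - ε) ^ 2) - Real.log (1 + (x + ε) ^ 2)) / 2) +
        (c * (x * (π / 2)) - c * (x * (-(π / 2))))) (𝓝[>] 0)
      (𝓝 (1 / (1 + x ^ 2) + -(1 / (1 + x ^ 2)) +
        c * (x * (Real.arctan x - Real.arctan x) +
          (Real.log (1 + x ^ 2) - Real.log (1 + x ^ 2)) / 2) +
        (c * (x * (π / 2)) - c * (x * (-(π / 2)))))) := by
    exact (((h1.add h2).add
      ((((harct_m.sub harct_p).const_mul x).add ((hlog_m.sub hlog_p).div_const 2)).const_mul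
        c)).add tendsto_const_nhds)
  have hval : (1 / (1 + x ^ 2) + -(1 / (1 + x ^ 2)) +
      c * (x * (Real.arctan x - Real.arctan x) +
        (Real.log (1 + x ^ 2) - Real.log (1 + x ^ 2)) / 2) +
      (c * (x * (π / 2)) - c * (x * (-(π / 2))))) = π * x / (1 + x ^ 2) := by
    rw [hc]
    field_simp
    ring
  rw [hval] at hT
  -- conclude by eventual equality
  apply hT.congr'
  filter_upwards [self_mem_nhdsWithin] with ε hε
  have hε' : (0:ℝ) < ε := hε
  rw [key ε hε']
  simp only [auxPhi]
  rw [show x - (x - ε) = ε from by ring, show x - (x + ε) = -ε from by ring,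
    Real.log_neg_eq_log, div_neg]
  ring
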